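/- Let m ∈ ℤ_{≥2}. Then every nonincreasing index n = (n₀, n₁, …, n_{m−1}) ∈ ℤ_{≥0}^m with n₀ ≥ n₁ ≥ … ≥ n_{m−1} is normal with respect to the tuple of formal power series (1, log(1+z), log²(1+z), …, log^{m−1}(1+z)). -/

import Mathlib

open PowerSeries

/-- `(A₁,…,A_m)` is a weight-`nn` Padé approximant of `f = (f₁,…,f_m)`. -/
def IsPadeApprox {K : Type*} [Field K] {m : ℕ} (f : Fin m → PowerSeries K)
    (nn : Fin m → ℕ) (A : Fin m → Polynomial K) : Prop :=
  A ≠ 0 ∧ (∀ j, (A j).degree ≤ (nn j : ℕ)) ∧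
    (((∑ j, (nn j + 1)) - 1 : ℕ) : ℕ∞) ≤ (∑ j, (A j : PowerSeries K) * f j).order

/-- The index `nn` is normal with respect to `f`. -/
def IsNormal {K : Type*} [Field K] {m : ℕ} (f : Fin m → PowerSeries K)
    (nn : Fin m → ℕ) : Prop :=
  ∀ A : Fin m → Polynomial K, IsPadeApprox f nn A →
    (∑ j, (A j : PowerSeries K) * f j).order = (((∑ j, (nn j + 1)) - 1 : ℕ) : ℕ∞)

/-- The formal power series `log(1+z) = Σ_{k≥1} (−1)^{k+1} z^k / k` over `ℚ`. -/
noncomputable def logPS : PowerSeries ℚ :=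
  PowerSeries.mk fun k => if k = 0 then 0 else (-1 : ℚ) ^ (k + 1) / (k : ℚ)

namespace LogAux

noncomputable def Dop (c : ℚ) (f : PowerSeries ℚ) : PowerSeries ℚ :=
  (1 + PowerSeries.X) * (d⁄dX ℚ f) - c • f

lemma one_add_X_mul_deriv_logPS :
    (1 + PowerSeries.X) * (d⁄dX ℚ logPS) = 1 := by
  have h : d⁄dX ℚ logPS = PowerSeries.mk (fun n => (-1 : ℚ) ^ n) := by
    ext n
    rw [PowerSeries.coeff_derivative]
    simp only [logPS, PowerSeries.coeff_mk, Nat.succ_ne_zero, if_false]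
    have hn : ((n : ℚ) + 1) ≠ 0 := by positivity
    push_cast
    rw [div_mul_cancel₀ _ hn]
    ring
  rw [h]
  ext n
  rw [add_mul, one_mul, map_add]
  cases n with
  | zero => simp
  | succ n =>
    rw [PowerSeries.coeff_succ_X_mul]
    simp [PowerSeries.coeff_one, pow_succ]

lemma deriv_aeval (q : Polynomial ℚ) :
    (1 + PowerSeries.X) * d⁄dX ℚ (Polynomial.aeval logPS q)
      = Polynomial.aeval logPS (Polynomial.derivative q) := by
  rw [Derivation.map_aeval, smul_eq_mul]
  rw [mul_comm (Polynomial.aeval logPS (Polynomial.derivative q)) _, ← mul_assoc,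
    one_add_X_mul_deriv_logPS, one_mul]


lemma pow_deriv (k : ℕ) :
    (1 + PowerSeries.X) * d⁄dX ℚ ((1 + PowerSeries.X) ^ k)
      = (k : ℚ) • ((1 + PowerSeries.X) ^ k) := by
  have h1 : d⁄dX ℚ (1 + PowerSeries.X) = 1 := by simp
  cases k with
  | zero => simp
  | succ k =>
    rw [Derivation.leibniz_pow, h1, smul_eq_mul, mul_one]
    rw [Nat.succ_sub_one]
    rw [← Nat.cast_smul_eq_nsmul ℚ]
    rw [mul_smul_comm, ← pow_succ']

lemma keyA (c : ℚ) (q : Polynomial ℚ) (k : ℕ) :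
    Dop c (Polynomial.aeval logPS q * (1 + PowerSeries.X) ^ k)
      = Polynomial.aeval logPS
          (Polynomial.derivative q + ((k : ℚ) - c) • q) * (1 + PowerSeries.X) ^ k := by
  have hl := Derivation.leibniz (d⁄dX ℚ) (Polynomial.aeval logPS q) ((1 + PowerSeries.X) ^ k)
  rw [Dop, hl]
  simp only [smul_eq_mul]
  rw [mul_add]
  have e1 : (1 + PowerSeries.X) * (Polynomial.aeval logPS q * d⁄dX ℚ ((1 + PowerSeries.X) ^ k))
      = (k : ℚ) • (Polynomial.aeval logPS q * (1 + PowerSeries.X) ^ k) := by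
    rw [mul_left_comm, pow_deriv, mul_smul_comm]
  have e2 : (1 + PowerSeries.X) * ((1 + PowerSeries.X) ^ k * d⁄dX ℚ (Polynomial.aeval logPS q))
      = Polynomial.aeval logPS (Polynomial.derivative q) * (1 + PowerSeries.X) ^ k := by
    rw [mul_left_comm, deriv_aeval, mul_comm]
  rw [e1, e2, map_add, map_smul, add_mul, smul_mul_assoc, sub_smul]
  ring

lemma order_Dop (c : ℚ) (f : PowerSeries ℚ) (n : ℕ)
    (h : ((n + 1 : ℕ) : ℕ∞) ≤ f.order) : ((n : ℕ) : ℕ∞) ≤ (Dop c f).order := by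
  apply PowerSeries.le_order
  intro i hi
  have hi' : i < n := by exact_mod_cast hi
  have hc : ∀ j : ℕ, j < n + 1 → PowerSeries.coeff j f = 0 := by
    intro j hj
    exact PowerSeries.coeff_of_lt_order j (lt_of_lt_of_le (by exact_mod_cast hj) h)
  have hd : ∀ j : ℕ, j < n → PowerSeries.coeff j (d⁄dX ℚ f) = 0 := by
    intro j hj
    rw [PowerSeries.coeff_derivative, hc _ (by omega), zero_mul]
  rw [Dop, map_sub, map_smul, add_mul, one_mul, map_add, hd i hi', smul_eq_mul,
    hc i (by omega), mul_zero, sub_zero, zero_add]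
  cases i with
  | zero => exact PowerSeries.coeff_zero_X_mul _
  | succ i => rw [PowerSeries.coeff_succ_X_mul]; exact hd i (by omega)

lemma poly_inj (c : ℚ) (hc : c ≠ 0) (q : Polynomial ℚ)
    (h : Polynomial.derivative q + c • q = 0) : q = 0 := by
  by_contra hq
  have h1 : (Polynomial.derivative q + c • q).coeff q.natDegree = c * q.leadingCoeff := by
    rw [Polynomial.coeff_add, Polynomial.coeff_smul, Polynomial.coeff_derivative,
      Polynomial.coeff_eq_zero_of_natDegree_lt (lt_add_one _), zero_mul, zero_add,
      smul_eq_mul, Polynomial.leadingCoeff]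
  rw [h, Polynomial.coeff_zero] at h1
  exact hc (by
    have := Polynomial.leadingCoeff_ne_zero.mpr hq
    rcases mul_eq_zero.mp h1.symm with h' | h'
    · exact h'
    · exact absurd h' this)

lemma Dop_sum (c : ℚ) (S : Finset ℕ) (F : ℕ → PowerSeries ℚ) :
    Dop c (∑ k ∈ S, F k) = ∑ k ∈ S, Dop c (F k) := by
  simp [Dop, Finset.mul_sum, Finset.smul_sum, Finset.sum_sub_distrib]

lemma main_induction (W : ℕ) : ∀ (S : Finset ℕ) (q : ℕ → Polynomial ℚ),
    (∑ k ∈ S, ((q k).natDegree + 1)) = W →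
    ((W : ℕ) : ℕ∞) ≤ (∑ k ∈ S, Polynomial.aeval logPS (q k) * (1 + PowerSeries.X) ^ k).order →
    ∀ k ∈ S, q k = 0 := by
  induction W using Nat.strong_induction_on with
  | _ W ih =>
  intro S q hW hord k hk
  have hS : S.Nonempty := ⟨k, hk⟩
  set k₀ := S.min' hS with hk₀def
  have hk₀ : k₀ ∈ S := S.min'_mem hS
  have hW1 : 1 ≤ W := by
    rw [← hW]
    exact Finset.single_le_sum (f := fun k => (q k).natDegree + 1)
      (fun i _ => Nat.zero_le _) hk₀ |>.trans' (Nat.le_add_left 1 _)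
  have hsplit : (∑ j ∈ S.erase k₀, ((q j).natDegree + 1)) + ((q k₀).natDegree + 1) = W := by
    rw [← hW]; exact Finset.sum_erase_add S _ hk₀
  by_cases h0 : q k₀ = 0
  · -- recurse on the erased set with the same polynomials
    have hsum : (∑ j ∈ S.erase k₀, Polynomial.aeval logPS (q j) * (1 + PowerSeries.X) ^ j)
        = ∑ j ∈ S, Polynomial.aeval logPS (q j) * (1 + PowerSeries.X) ^ j :=
      Finset.sum_erase S (by rw [h0, map_zero, zero_mul])
    have hWe : (∑ j ∈ S.erase k₀, ((q j).natDegree + 1)) = W - 1 := by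
      rw [h0] at hsplit; simp at hsplit; omega
    have hz := ih (W - 1) (by omega) (S.erase k₀) q hWe
      (by rw [hsum]; exact le_trans (by exact_mod_cast Nat.sub_le W 1) hord)
    rcases eq_or_ne k k₀ with rfl | hne
    · exact h0
    · exact hz k (Finset.mem_erase.mpr ⟨hne, hk⟩)
  · exfalso
    set q' : ℕ → Polynomial ℚ :=
      fun j => Polynomial.derivative (q j) + ((j : ℚ) - (k₀ : ℚ)) • q j with hq'def
    set F := ∑ j ∈ S, Polynomial.aeval logPS (q j) * (1 + PowerSeries.X) ^ j with hFdef
    have hF' : Dop (k₀ : ℚ) F = ∑ j ∈ S, Polynomial.aeval logPS (q' j) * (1 + PowerSeries.X) ^ j := by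
      rw [hFdef, Dop_sum]
      exact Finset.sum_congr rfl fun j _ => keyA _ _ _
    have hordF' : ((W - 1 : ℕ) : ℕ∞) ≤ (Dop (k₀ : ℚ) F).order := by
      apply order_Dop
      rw [Nat.sub_add_cancel hW1]
      exact hord
    have hqle : ∀ j : ℕ, (q' j).natDegree ≤ (q j).natDegree := by
      intro j
      refine le_trans (Polynomial.natDegree_add_le _ _) (max_le ?_ (Polynomial.natDegree_smul_le _ _))
      exact le_trans (Polynomial.natDegree_derivative_le _) (Nat.sub_le _ _)
    have hinj : ∀ j ∈ S.erase k₀, q' j = 0 → q j = 0 := by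
      intro j hj hqj
      have hjne : j ≠ k₀ := (Finset.mem_erase.mp hj).1
      refine poly_inj ((j : ℚ) - (k₀ : ℚ)) ?_ (q j) hqj
      rw [sub_ne_zero]
      exact_mod_cast hjne
    by_cases hnd : (q k₀).natDegree = 0
    · -- constant leading case
      obtain ⟨c, hc⟩ := Polynomial.natDegree_eq_zero.mp hnd
      have hcne : c ≠ 0 := by rintro rfl; simp at hc; exact h0 hc.symm
      have hq'k₀ : q' k₀ = 0 := by
        rw [hq'def]; simp [← hc, sub_self]
      have hsum2 : (∑ j ∈ S.erase k₀, Polynomial.aeval logPS (q' j) * (1 + PowerSeries.X) ^ j)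
          = Dop (k₀ : ℚ) F := by
        rw [hF']
        exact Finset.sum_erase S (by rw [hq'k₀, map_zero, zero_mul])
      set W' := ∑ j ∈ S.erase k₀, ((q' j).natDegree + 1) with hW'def
      have hW'le : W' ≤ W - 1 := by
        have : W' ≤ ∑ j ∈ S.erase k₀, ((q j).natDegree + 1) :=
          Finset.sum_le_sum fun j _ => by have := hqle j; omega
      -- sum over erase of q = W - (nd q k₀ + 1) = W - 1
        omega
      have hz := ih W' (by omega) (S.erase k₀) q' rfl
        (by rw [hsum2]; exact le_trans (by exact_mod_cast hW'le) hordF')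
      have hqz : ∀ j ∈ S.erase k₀, q j = 0 := fun j hj => hinj j hj (hz j hj)
      -- now F is a single unit term, contradiction with order ≥ W ≥ 1
      have hFsingle : F = Polynomial.aeval logPS (q k₀) * (1 + PowerSeries.X) ^ k₀ := by
        rw [hFdef]
        refine Finset.sum_eq_single_of_mem k₀ hk₀ fun j hj hjne => ?_
        rw [hqz j (Finset.mem_erase.mpr ⟨hjne, hj⟩), map_zero, zero_mul]
      have hconst : PowerSeries.constantCoeff F = c := by
        rw [hFsingle, ← hc]
        simp [Polynomial.aeval_C]
      have : F.order ≤ 0 := by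
        apply PowerSeries.order_le 0
        rw [PowerSeries.coeff_zero_eq_constantCoeff, hconst]
        exact hcne
      have h1 : ((1 : ℕ) : ℕ∞) ≤ F.order := le_trans (by exact_mod_cast hW1) hord
      have : (1 : ℕ∞) ≤ 0 := le_trans (by exact_mod_cast h1) this
      simp at this
    · -- degree ≥ 1 case
      have hq'k₀ : q' k₀ = Polynomial.derivative (q k₀) := by
        rw [hq'def]; simp [sub_self]
      set W' := ∑ j ∈ S, ((q' j).natDegree + 1) with hW'def
      have hW'le : W' ≤ W - 1 := by
        have h1 : (∑ j ∈ S.erase k₀, ((q' j).natDegree + 1))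
            ≤ ∑ j ∈ S.erase k₀, ((q j).natDegree + 1) :=
          Finset.sum_le_sum fun j _ => by have := hqle j; omega
        have h2 : (q' k₀).natDegree + 1 ≤ (q k₀).natDegree := by
          rw [hq'k₀]
          exact Polynomial.natDegree_derivative_lt hnd
        have h3 : (∑ j ∈ S.erase k₀, ((q' j).natDegree + 1)) + ((q' k₀).natDegree + 1) = W' :=
          Finset.sum_erase_add S _ hk₀
        omega
      have hz := ih W' (by omega) S q' rfl
        (by rw [← hF']; exact le_trans (by exact_mod_cast hW'le) hordF')
      have := hz k₀ hk₀
      rw [hq'k₀] at this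
      exact hnd (Polynomial.natDegree_eq_zero_of_derivative_eq_zero this)

lemma aeval_X_eq_coe (p : Polynomial ℚ) :
    Polynomial.aeval (PowerSeries.X : PowerSeries ℚ) p = ↑p := by
  induction p using Polynomial.induction_on' with
  | add p q hp hq => rw [map_add, Polynomial.coe_add, hp, hq]
  | monomial n a =>
    rw [Polynomial.aeval_monomial, Polynomial.coe_monomial,
      ← PowerSeries.C_eq_algebraMap]
    ext i
    simp [PowerSeries.coeff_X_pow, PowerSeries.coeff_monomial, eq_comm, mul_comm]

lemma zero_of_high_order (m : ℕ) (hm : 2 ≤ m) (nn : Fin m → ℕ)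
    (hmono : ∀ i j : Fin m, i ≤ j → nn j ≤ nn i) (A : Fin m → Polynomial ℚ)
    (hdeg : ∀ j, (A j).degree ≤ (nn j : ℕ))
    (hord : ((∑ j, (nn j + 1) : ℕ) : ℕ∞)
      ≤ (∑ j, (A j : PowerSeries ℚ) * logPS ^ (j : ℕ)).order) :
    A = 0 := by
  have hm0 : 0 < m := by omega
  set z0 : Fin m := ⟨0, hm0⟩ with hz0
  have hz0le : ∀ j : Fin m, z0 ≤ j := fun j => by simp [hz0, Fin.le_def]
  set B : Fin m → Polynomial ℚ := fun j => (A j).comp (Polynomial.X - Polynomial.C 1) with hB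
  have hndA : ∀ j, (A j).natDegree ≤ nn j := fun j =>
    Polynomial.natDegree_le_iff_degree_le.mpr (hdeg j)
  have hndB : ∀ j, (B j).natDegree ≤ nn j := by
    intro j
    rw [hB]
    simp only [Polynomial.natDegree_comp, Polynomial.natDegree_X_sub_C, mul_one]
    exact hndA j
  set n₀ := nn z0 with hn₀
  set q : ℕ → Polynomial ℚ :=
    fun k => ∑ j : Fin m, Polynomial.monomial (j : ℕ) ((B j).coeff k) with hqdef
  -- rewrite each polynomial in the basis (1+X)^k
  have hcoe : ∀ j : Fin m, (A j : PowerSeries ℚ)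
      = ∑ k ∈ Finset.range (n₀ + 1), (B j).coeff k • (1 + PowerSeries.X : PowerSeries ℚ) ^ k := by
    intro j
    have h1 : (Polynomial.aeval (1 + PowerSeries.X : PowerSeries ℚ)
        (Polynomial.X - Polynomial.C 1 : Polynomial ℚ)) = PowerSeries.X := by
      simp
    have h2 : (A j : PowerSeries ℚ)
        = Polynomial.aeval (1 + PowerSeries.X : PowerSeries ℚ) (B j) := by
      rw [hB]
      simp only []
      rw [Polynomial.aeval_comp, h1, aeval_X_eq_coe]
    rw [h2]
    exact Polynomial.aeval_eq_sum_range' (lt_of_le_of_lt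
      (le_trans (hndB j) (hmono z0 j (hz0le j))) (Nat.lt_succ_self _)) _
  -- the key identity
  have hFeq : (∑ j, (A j : PowerSeries ℚ) * logPS ^ (j : ℕ))
      = ∑ k ∈ Finset.range (n₀ + 1),
          Polynomial.aeval logPS (q k) * (1 + PowerSeries.X) ^ k := by
    calc (∑ j, (A j : PowerSeries ℚ) * logPS ^ (j : ℕ))
        = ∑ j : Fin m, ∑ k ∈ Finset.range (n₀ + 1),
            ((B j).coeff k • (1 + PowerSeries.X : PowerSeries ℚ) ^ k) * logPS ^ (j : ℕ) := by
          refine Finset.sum_congr rfl fun j _ => ?_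
          rw [hcoe j, Finset.sum_mul]
      _ = ∑ k ∈ Finset.range (n₀ + 1), ∑ j : Fin m,
            ((B j).coeff k • (1 + PowerSeries.X : PowerSeries ℚ) ^ k) * logPS ^ (j : ℕ) :=
          Finset.sum_comm
      _ = ∑ k ∈ Finset.range (n₀ + 1),
            Polynomial.aeval logPS (q k) * (1 + PowerSeries.X) ^ k := by
          refine Finset.sum_congr rfl fun k _ => ?_
          rw [hqdef]
          simp only [map_sum, Polynomial.aeval_monomial, Finset.sum_mul]
          refine Finset.sum_congr rfl fun j _ => ?_
          rw [Algebra.smul_def]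
          ring
  -- counting function
  set d : ℕ → ℕ := fun k => (Finset.univ.filter (fun j : Fin m => k ≤ nn j)).card with hd
  have hjd : ∀ (k : ℕ) (j : Fin m), (B j).coeff k ≠ 0 → (j : ℕ) < d k := by
    intro k j hne
    have hk' : k ≤ nn j := le_trans (Polynomial.le_natDegree_of_ne_zero hne) (hndB j)
    have hsub : Finset.Iic j ⊆ Finset.univ.filter (fun i : Fin m => k ≤ nn i) := by
      intro i hi
      exact Finset.mem_filter.mpr ⟨Finset.mem_univ i,
        le_trans hk' (hmono i j (Finset.mem_Iic.mp hi))⟩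
    have hcard := Finset.card_le_card hsub
    rwa [Fin.card_Iic, Nat.succ_le_iff] at hcard
  have hd1 : ∀ k ∈ Finset.range (n₀ + 1), 1 ≤ d k := by
    intro k hk
    refine Finset.card_pos.mpr ⟨z0, Finset.mem_filter.mpr ⟨Finset.mem_univ _, ?_⟩⟩
    rw [Finset.mem_range] at hk
    omega
  have hqd : ∀ k ∈ Finset.range (n₀ + 1), (q k).natDegree + 1 ≤ d k := by
    intro k hk
    have h1 : (q k).natDegree ≤ d k - 1 := by
      rw [Polynomial.natDegree_le_iff_coeff_eq_zero]
      intro N hN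
      rw [hqdef]
      simp only [Polynomial.finset_sum_coeff, Polynomial.coeff_monomial]
      refine Finset.sum_eq_zero fun j _ => ?_
      split_ifs with hij
      · by_contra hne
        have := hjd k j hne
        omega
      · rfl
    have := hd1 k hk
    omega
  have hsum_d : (∑ k ∈ Finset.range (n₀ + 1), d k) = ∑ j, (nn j + 1) := by
    rw [hd]
    simp only [Finset.card_filter]
    rw [Finset.sum_comm]
    refine Finset.sum_congr rfl fun j _ => ?_
    have hle : nn j ≤ n₀ := hmono z0 j (hz0le j)
    have : (Finset.range (n₀ + 1)).filter (fun k => k ≤ nn j) = Finset.range (nn j + 1) := by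
      ext x
      simp only [Finset.mem_filter, Finset.mem_range]
      omega
    rw [← Finset.card_filter _ _, this, Finset.card_range]
  -- apply the main induction
  have hz : ∀ k ∈ Finset.range (n₀ + 1), q k = 0 := by
    refine main_induction _ _ _ rfl ?_
    rw [← hFeq]
    refine le_trans ?_ hord
    have hWN : (∑ k ∈ Finset.range (n₀ + 1), ((q k).natDegree + 1)) ≤ ∑ j, (nn j + 1) := by
      rw [← hsum_d]
      exact Finset.sum_le_sum hqd
    exact_mod_cast hWN
  -- conclude coefficients vanish
  have hBz : ∀ j, B j = 0 := by
    intro j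
    ext k
    rcases le_or_gt k n₀ with hk | hk
    · have hqk := hz k (Finset.mem_range.mpr (by omega))
      have := congrArg (fun p => Polynomial.coeff p (j : ℕ)) hqk
      simp only [hqdef, Polynomial.finset_sum_coeff, Polynomial.coeff_monomial,
        Polynomial.coeff_zero] at this
      rw [Finset.sum_eq_single j (fun j' _ hj' => by
        rw [if_neg (fun h => hj' (Fin.ext h))]) (fun h => absurd (Finset.mem_univ j) h),
        if_pos rfl] at this
      simpa using this
    · simp only [Polynomial.coeff_zero]
      exact Polynomial.coeff_eq_zero_of_natDegree_lt
        (lt_of_le_of_lt (le_trans (hndB j) (hmono z0 j (hz0le j))) hk)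
  funext j
  have hAj : A j = (B j).comp (Polynomial.X + Polynomial.C 1) := by
    rw [hB]
    simp only []
    rw [Polynomial.comp_assoc]
    simp [Polynomial.sub_comp]
  rw [hAj, hBz j, Polynomial.zero_comp]
  rfl

end LogAux

/-- every nonincreasing index is normal with respect to
`(1, log(1+z), …, log^{m−1}(1+z))`. -/
theorem log_powers_normal (m : ℕ) (hm : 2 ≤ m) (nn : Fin m → ℕ)
    (hmono : ∀ i j : Fin m, i ≤ j → nn j ≤ nn i) :
    IsNormal (fun j : Fin m => logPS ^ (j : ℕ)) nn := by
  intro A hA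
  obtain ⟨hA0, hdeg, hord⟩ := hA
  have hN1 : 1 ≤ ∑ j, (nn j + 1) := by
    calc 1 ≤ m := by omega
    _ = ∑ _j : Fin m, 1 := by simp
    _ ≤ ∑ j, (nn j + 1) := Finset.sum_le_sum fun j _ => by omega
  refine le_antisymm ?_ hord
  by_contra hlt
  push_neg at hlt
  have hle : ((∑ j, (nn j + 1) : ℕ) : ℕ∞)
      ≤ (∑ j, (A j : PowerSeries ℚ) * (fun j : Fin m => logPS ^ (j : ℕ)) j).order := by
    have h1 := Order.add_one_le_of_lt hlt
    have h2 : ((((∑ j, (nn j + 1)) - 1 : ℕ) : ℕ∞) + 1)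
        = ((∑ j, (nn j + 1) : ℕ) : ℕ∞) := by
      exact_mod_cast congrArg (Nat.cast : ℕ → ℕ∞) (Nat.sub_add_cancel hN1)
    rwa [h2] at h1
  exact hA0 (LogAux.zero_of_high_order m hm nn hmono A hdeg hle)
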